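/- Let a, b be nonzero complex numbers with a ≠ b and let C ≠ 0. The function f(z) = C·exp(b·z/(b-a)) + a satisfies: f never takes the value a, f and f' share the value b (f(z₀) = b ⇔ f'(z₀) = b), and all b-points of f' are simple. -/

import Mathlib

theorem stmt_9 (a b C : ℂ) (ha : a ≠ 0) (hb : b ≠ 0) (hab : a ≠ b) (hC : C ≠ 0)
    (f : ℂ → ℂ) (hf : f = fun z => C * Complex.exp (b * z / (b - a)) + a) :
    (∀ z : ℂ, f z ≠ a) ∧
    (∀ z₀ : ℂ, f z₀ = b ↔ deriv f z₀ = b) ∧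
    (∀ z₀ : ℂ, deriv f z₀ = b → iteratedDeriv 2 f z₀ ≠ 0) := by
  have hba : b - a ≠ 0 := sub_ne_zero.mpr (Ne.symm hab)
  have hg : ∀ z : ℂ, HasDerivAt (fun z => b * z / (b - a)) (b / (b - a)) z := by
    intro z
    simpa using ((hasDerivAt_id z).const_mul b).div_const (b - a)
  have hd : ∀ z : ℂ, HasDerivAt f (C * Complex.exp (b * z / (b - a)) * (b / (b - a))) z := by
    intro z
    rw [hf]
    have := (((hg z).cexp).const_mul C).add_const a
    simpa [mul_assoc, mul_comm, mul_left_comm] using this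
  have hderiv : deriv f = fun z => C * Complex.exp (b * z / (b - a)) * (b / (b - a)) := by
    funext z; exact (hd z).deriv
  have hd2 : ∀ z : ℂ, HasDerivAt (deriv f)
      (C * Complex.exp (b * z / (b - a)) * (b / (b - a)) * (b / (b - a))) z := by
    intro z
    rw [hderiv]
    have := (((hg z).cexp).const_mul (C * (b / (b - a))))
    simpa [mul_assoc, mul_comm, mul_left_comm] using this
  have hexp : ∀ z : ℂ, Complex.exp (b * z / (b - a)) ≠ 0 := fun z => Complex.exp_ne_zero _
  have hk : b / (b - a) ≠ 0 := div_ne_zero hb hba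
  refine ⟨?_, ?_, ?_⟩
  · intro z
    rw [hf]
    simp only
    intro h
    have h0 : C * Complex.exp (b * z / (b - a)) = 0 := by linear_combination h
    exact (mul_ne_zero hC (hexp z)) h0
  · intro z₀
    rw [hderiv, hf]
    simp only
    constructor
    · intro h
      have hce : C * Complex.exp (b * z₀ / (b - a)) = b - a := by linear_combination h
      rw [hce]; field_simp
    · intro h
      have h' : C * Complex.exp (b * z₀ / (b - a)) * b = (b - a) * b := by
        field_simp at h; linear_combination b * h
      have hce : C * Complex.exp (b * z₀ / (b - a)) = b - a := mul_right_cancel₀ hb h'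
      linear_combination hce
  · intro z₀ _
    have h2 : iteratedDeriv 2 f z₀ =
        C * Complex.exp (b * z₀ / (b - a)) * (b / (b - a)) * (b / (b - a)) := by
      rw [iteratedDeriv_succ, iteratedDeriv_one]
      exact (hd2 z₀).deriv
    rw [h2]
    exact mul_ne_zero (mul_ne_zero (mul_ne_zero hC (hexp z₀)) hk) hk
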